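/- For positive integers x, y, m, if x divides y then L_m(x) divides L_m(y). -/

import Mathlib

open Finset

/-- The Schemmel totient function: `L m 0 = 0`, `L m 1 = 1`, and for `n > 1`,
`L m n = ∏ p^(α-1) (p - m)` over the canonical factorization of `n` if every
prime divisor of `n` exceeds `m`, and `0` otherwise. -/
def L (m n : ℕ) : ℕ :=
  if n ≤ 1 then n
  else if ∀ p ∈ n.primeFactors, m < p then
    ∏ p ∈ n.primeFactors, p ^ (n.factorization p - 1) * (p - m)
  else 0

theorem schemmel_dvd (x y m : ℕ) (hx : 0 < x) (hy : 0 < y) (hm : 0 < m)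
    (h : x ∣ y) : L m x ∣ L m y := by
  rcases eq_or_lt_of_le (show 1 ≤ x from hx) with hx1 | hx1
  · have : x = 1 := hx1.symm
    subst this
    simp [L]
  rcases eq_or_lt_of_le (show 1 ≤ y from hy) with hy1 | hy1
  · exfalso
    have := Nat.le_of_dvd hy h
    omega
  have hxn : ¬ x ≤ 1 := by omega
  have hyn : ¬ y ≤ 1 := by omega
  unfold L
  by_cases hcy : ∀ p ∈ y.primeFactors, m < p
  · rw [if_neg hxn, if_neg hyn, if_pos hcy]
    have hsub : x.primeFactors ⊆ y.primeFactors :=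
      Nat.primeFactors_mono h hy.ne'
    have hcx : ∀ p ∈ x.primeFactors, m < p := fun p hp => hcy p (hsub hp)
    rw [if_pos hcx]
    calc (∏ p ∈ x.primeFactors, p ^ (x.factorization p - 1) * (p - m))
        ∣ ∏ p ∈ x.primeFactors, p ^ (y.factorization p - 1) * (p - m) := by
          apply Finset.prod_dvd_prod_of_dvd
          intro p hp
          exact mul_dvd_mul (pow_dvd_pow p (by
            have := (Nat.factorization_le_iff_dvd hx.ne' hy.ne').mpr h p
            omega)) dvd_rfl
      _ ∣ ∏ p ∈ y.primeFactors, p ^ (y.factorization p - 1) * (p - m) :=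
          Finset.prod_dvd_prod_of_subset _ _ _ hsub
  · rw [if_neg hyn, if_neg hcy]
    exact dvd_zero _
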